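/- In a t-ary fat-tree, for any two distinct servers there exists a path between them through the switches; moreover, if they lie under the same edge switch the shortest path has length 2, if in the same pod but different edges length 4, and if in different pods length 6. -/

import Mathlib

/-- Vertices of the `t`-ary fat-tree with `m = t/2`: cores `Fin (m*m)`,
aggregations and edges `Fin t × Fin m` (pod, index), servers
`Fin t × Fin m × Fin m` (pod, edge, position). -/
inductive FatTreeVertex (t m : ℕ) where
  | core : Fin (m * m) → FatTreeVertex t m
  | agg : Fin t → Fin m → FatTreeVertex t m
  | edge : Fin t → Fin m → FatTreeVertex t m
  | server : Fin t → Fin m → Fin m → FatTreeVertex t m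
  deriving DecidableEq

/-- One-directional (top-down) link relation of the fat-tree: core `c` links to
aggregation `a_{i,j}` iff `c / m = j`; aggregation `a_{i,j}` links to every edge in
pod `i`; edge `e_{i,p}` links to server `w_{i,p,s}`. -/
def fatTreeLink (t m : ℕ) : FatTreeVertex t m → FatTreeVertex t m → Prop
  | .core c, .agg _ j => (c : ℕ) / m = (j : ℕ)
  | .agg i _, .edge i' _ => i = i'
  | .edge i p, .server i' p' _ => i = i' ∧ p = p'
  | _, _ => False

/-- The fat-tree graph: two vertices are adjacent iff one links to the other. -/
def fatTreeGraph (t m : ℕ) : SimpleGraph (FatTreeVertex t m) where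
  Adj u v := fatTreeLink t m u v ∨ fatTreeLink t m v u
  symm := by constructor; intro u v h; exact h.symm
  loopless := by
    constructor
    intro v h
    cases v <;> simp only [fatTreeLink] at h <;> exact h.elim id id

namespace FT
variable {t m : ℕ}

lemma adj_server_right {u : FatTreeVertex t m} {i : Fin t} {p s : Fin m}
    (h : (fatTreeGraph t m).Adj u (.server i p s)) : u = .edge i p := by
  cases u <;> simp only [fatTreeGraph, fatTreeLink, or_self, or_false] at h
  rw [h.1, h.2]

lemma adj_server_left {u : FatTreeVertex t m} {i : Fin t} {p s : Fin m}
    (h : (fatTreeGraph t m).Adj (.server i p s) u) : u = .edge i p :=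
  adj_server_right h.symm

lemma adj_edge_right {u : FatTreeVertex t m} {i : Fin t} {p : Fin m}
    (h : (fatTreeGraph t m).Adj u (.edge i p)) :
    (∃ j, u = .agg i j) ∨ ∃ s, u = .server i p s := by
  cases u with
  | core c => simp only [fatTreeGraph, fatTreeLink, or_self] at h
  | agg i'' j =>
      simp only [fatTreeGraph, fatTreeLink, or_false] at h
      exact Or.inl ⟨j, by rw [h]⟩
  | edge i'' p'' => simp only [fatTreeGraph, fatTreeLink, or_self] at h
  | server i'' p'' s'' =>
      simp only [fatTreeGraph, fatTreeLink, false_or] at h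
      exact Or.inr ⟨s'', by rw [h.1, h.2]⟩

def lvl : FatTreeVertex t m → ZMod 2
  | .core _ => 0
  | .agg _ _ => 1
  | .edge _ _ => 0
  | .server _ _ _ => 1

lemma adj_lvl {u v : FatTreeVertex t m} (h : (fatTreeGraph t m).Adj u v) :
    lvl u + lvl v = 1 := by
  cases u <;> cases v <;>
    simp only [fatTreeGraph, fatTreeLink, or_self, or_false, false_or] at h <;>
    first | exact h.elim | rfl

lemma walk_lvl {u v : FatTreeVertex t m} (w : (fatTreeGraph t m).Walk u v) :
    (w.length : ZMod 2) = lvl u + lvl v := by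
  induction w with
  | nil =>
      have : ∀ x : ZMod 2, (0 : ZMod 2) = x + x := by decide
      simpa using this _
  | cons h w ih =>
      have h2 := adj_lvl h
      have key : ∀ x y z : ZMod 2, x + y = 1 → y + z + 1 = x + z := by decide
      simp only [SimpleGraph.Walk.length_cons, Nat.cast_add, Nat.cast_one, ih]
      exact key _ _ _ h2

lemma even_dist_server {i i' : Fin t} {p p' s s' : Fin m}
    (h : ((fatTreeGraph t m).dist (.server i p s) (.server i' p' s')) ≠ 0) :
    2 ∣ (fatTreeGraph t m).dist (.server i p s) (.server i' p' s') := by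
  obtain ⟨w, hw⟩ := SimpleGraph.exists_walk_of_dist_ne_zero h
  have h2 : (((fatTreeGraph t m).dist (.server i p s) (.server i' p' s') : ZMod 2)) = 0 := by
    rw [← hw, walk_lvl w]; rfl
  exact (ZMod.natCast_eq_zero_iff _ 2).mp h2

end FT

/-- In a `t`-ary fat-tree (`t = 2m ≥ 2`), any two distinct servers are connected by
a path through the switches; moreover the shortest path (graph distance) has length
2 if they lie under the same edge switch, 4 if they are in the same pod but under
different edge switches, and 6 if they are in different pods. -/
theorem stmt_10 (t m : ℕ) (ht : t = 2 * m) (hm : 1 ≤ m)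
    (i i' : Fin t) (p p' s s' : Fin m)
    (hne : FatTreeVertex.server i p s ≠ FatTreeVertex.server (t := t) i' p' s') :
    ((fatTreeGraph t m).Reachable (.server i p s) (.server i' p' s')) ∧
    (i = i' → p = p' →
      (fatTreeGraph t m).dist (.server i p s) (.server i' p' s') = 2) ∧
    (i = i' → p ≠ p' →
      (fatTreeGraph t m).dist (.server i p s) (.server i' p' s') = 4) ∧
    (i ≠ i' →
      (fatTreeGraph t m).dist (.server i p s) (.server i' p' s') = 6) := by
  have hmm : 0 < m * m := Nat.mul_pos hm hm
  set G := fatTreeGraph t m with hG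
  let j0 : Fin m := ⟨0, hm⟩
  let c0 : Fin (m * m) := ⟨0, hmm⟩
  have a_se : ∀ (a : Fin t) (b c : Fin m), G.Adj (.server a b c) (.edge a b) :=
    fun _ _ _ => Or.inr ⟨rfl, rfl⟩
  have a_ea : ∀ (a : Fin t) (b j : Fin m), G.Adj (.edge a b) (.agg a j) :=
    fun _ _ _ => Or.inr rfl
  have a_ac : ∀ (a : Fin t), G.Adj (.agg a j0) (.core c0) :=
    fun _ => Or.inr (Nat.zero_div m)
  -- the long walk, always available
  let w6 : G.Walk (.server i p s) (.server i' p' s') :=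
    .cons (a_se i p s) (.cons (a_ea i p j0) (.cons (a_ac i)
      (.cons (a_ac i').symm (.cons (a_ea i' p' j0).symm
        (.cons (a_se i' p' s').symm .nil)))))
  have hreach : G.Reachable (.server i p s) (.server i' p' s') := ⟨w6⟩
  have hle6 : G.dist (.server i p s) (.server i' p' s') ≤ 6 := by
    have := SimpleGraph.dist_le w6
    simpa [w6] using this
  have hd0 : G.dist (.server i p s) (.server i' p' s') ≠ 0 :=
    SimpleGraph.dist_ne_zero_iff_ne_and_reachable.mpr ⟨hne, hreach⟩
  have hdvd : 2 ∣ G.dist (.server i p s) (.server i' p' s') := FT.even_dist_server hd0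
  -- dist ≠ 2 unless same edge switch
  have hne2 : (i ≠ i' ∨ p ≠ p') → G.dist (.server i p s) (.server i' p' s') ≠ 2 := by
    intro hd hdist
    obtain ⟨w, hw⟩ := SimpleGraph.exists_walk_of_dist_ne_zero hd0
    rw [hdist] at hw
    cases w with
    | nil => simp at hw
    | cons h1 w1 =>
      cases w1 with
      | nil => simp at hw
      | cons h2 w2 =>
        cases w2 with
        | cons h3 w3 => simp only [SimpleGraph.Walk.length_cons] at hw; omega
        | nil =>
          have e1 := FT.adj_server_left h1
          subst e1
          have e2 := FT.adj_server_right h2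
          injection e2 with ha hb
          rcases hd with hd | hd
          · exact hd ha
          · exact hd hb
  -- dist ≠ 4 when pods differ
  have hne4 : i ≠ i' → G.dist (.server i p s) (.server i' p' s') ≠ 4 := by
    intro hd hdist
    obtain ⟨w, hw⟩ := SimpleGraph.exists_walk_of_dist_ne_zero hd0
    rw [hdist] at hw
    cases w with
    | nil => simp at hw
    | cons h1 w1 =>
      cases w1 with
      | nil => simp at hw
      | cons h2 w2 =>
        cases w2 with
        | nil => simp at hw
        | cons h3 w3 =>
          cases w3 with
          | nil => simp at hw
          | cons h4 w4 =>
            cases w4 with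
            | cons h5 w5 => simp only [SimpleGraph.Walk.length_cons] at hw; omega
            | nil =>
              have e1 := FT.adj_server_left h1
              subst e1
              have e4 := FT.adj_server_right h4
              subst e4
              rcases FT.adj_edge_right h3 with ⟨j, hj⟩ | ⟨s2, hs2⟩
              · subst hj
                have : i' = i := by
                  have h2' := h2
                  simp only [hG, fatTreeGraph, fatTreeLink, false_or] at h2'
                  exact h2'
                exact hd this.symm
              · subst hs2
                have := FT.adj_server_right h2
                injection this with ha hb
                exact hd ha
  refine ⟨hreach, ?_, ?_, ?_⟩
  · rintro rfl rfl
    let w2 : G.Walk (.server i p s) (.server i p s') :=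
      .cons (a_se i p s) ((a_se i p s').symm.toWalk)
    have hle2 : G.dist (.server i p s) (.server i p s') ≤ 2 := by
      have := SimpleGraph.dist_le w2
      simpa [w2] using this
    omega
  · rintro rfl hpp
    let w4 : G.Walk (.server i p s) (.server i p' s') :=
      .cons (a_se i p s) (.cons (a_ea i p j0) (.cons (a_ea i p' j0).symm
        ((a_se i p' s').symm.toWalk)))
    have hle4 : G.dist (.server i p s) (.server i p' s') ≤ 4 := by
      have := SimpleGraph.dist_le w4
      simpa [w4] using this
    have := hne2 (Or.inr hpp)
    omega
  · intro hii
    have h2 := hne2 (Or.inl hii)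
    have h4 := hne4 hii
    omega
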